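/- Assume D ≠ 0. There exists a constant C > 0, depending only on the forms q₁,…,q_g, such that for every prime p and all integers e₁,…,e_g ≥ 0 one has ρ*(p^{e₁},…,p^{e_g}) ≤ C · p^{max(e₁,…,e_g)}. -/

import Mathlib

open Finset

/-- The binary quadratic form `q_i(x,y) = a_i x^2 + 2 b_i x y + c_i y^2`. -/
def qf {g : ℕ} (a b c : Fin g → ℤ) (i : Fin g) (x : ℤ × ℤ) : ℤ :=
  a i * x.1 ^ 2 + 2 * b i * x.1 * x.2 + c i * x.2 ^ 2

/-- The resolvent of two binary quadratic forms. -/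
def res₂ (a₁ b₁ c₁ a₂ b₂ c₂ : ℤ) : ℤ :=
  (a₁ * c₂ - a₂ * c₁) ^ 2 - 4 * (b₁ * c₂ - b₂ * c₁) * (a₁ * b₂ - a₂ * b₁)

/-- The quantity `D`. -/
def Dconst (g : ℕ) (a b c : Fin g → ℤ) : ℤ :=
  (∏ p ∈ (Finset.range (2 * g + 1)).filter Nat.Prime, (p : ℤ)) *
    (∏ k, a k * c k * (b k ^ 2 - a k * c k)) *
    ∏ i, ∏ j ∈ Finset.Ioi i, res₂ (a i) (b i) (c i) (a j) (b j) (c j)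

/-- `ρ(d₁,…,d_g)`. -/
def rho (g : ℕ) (a b c : Fin g → ℤ) (d : Fin g → ℕ) : ℕ :=
  (((Finset.range (∏ i, d i)) ×ˢ (Finset.range (∏ i, d i))).filter
    (fun x => ∀ i, (d i : ℤ) ∣ qf a b c i ((x.1 : ℤ), (x.2 : ℤ)))).card

/-- `ρ*(d₁,…,d_g)`. -/
def rhostar (g : ℕ) (a b c : Fin g → ℤ) (d : Fin g → ℕ) : ℕ :=
  (((Finset.range (∏ i, d i)) ×ˢ (Finset.range (∏ i, d i))).filter
    (fun x => (∀ i, (d i : ℤ) ∣ qf a b c i ((x.1 : ℤ), (x.2 : ℤ))) ∧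
      Nat.gcd (Nat.gcd x.1 x.2) (∏ i, d i) = 1)).card

/-- `ψ(d₁,…,d_g) = ∏_p p^{⌈max_i v_p(d_i)/2⌉}`. -/
def psi (g : ℕ) (d : Fin g → ℕ) : ℕ :=
  ∏ p ∈ (∏ i, d i).primeFactors,
    p ^ (((Finset.univ.sup fun i => (d i).factorization p) + 1) / 2)

/-- a uniform upper bound `ρ*(p^{e₁},…,p^{e_g}) ≤ C·p^{max eᵢ}`. -/
lemma res_bezout' (a₁ b₁ c₁ a₂ b₂ c₂ x y : ℤ) :
    y ^ 3 * res₂ a₁ b₁ c₁ a₂ b₂ c₂ =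
      (2*a₂*(a₁*b₂-a₂*b₁)*x + (a₁*(4*b₂*b₂ - a₂*c₂) - 4*a₂*b₁*b₂ + a₂*a₂*c₁)*y) *
        (a₁*x^2 + 2*b₁*x*y + c₁*y^2) +
      (-(2*a₁*(a₁*b₂-a₂*b₁))*x + (a₁*(a₁*c₂-4*b₁*b₂) + 4*a₂*b₁*b₁ - a₁*a₂*c₁)*y) *
        (a₂*x^2 + 2*b₂*x*y + c₂*y^2) := by
  unfold res₂; ring

lemma res_swap' (a₁ b₁ c₁ a₂ b₂ c₂ : ℤ) :
    res₂ a₂ b₂ c₂ a₁ b₁ c₁ = res₂ a₁ b₁ c₁ a₂ b₂ c₂ := by unfold res₂; ring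

lemma res_rev' (a₁ b₁ c₁ a₂ b₂ c₂ : ℤ) :
    res₂ c₁ b₁ a₁ c₂ b₂ a₂ = res₂ a₁ b₁ c₁ a₂ b₂ c₂ := by unfold res₂; ring

lemma prime_pow_dvd_cancel {p : ℕ} (hp : p.Prime) {e : ℕ} {x R : ℤ}
    (hx : ¬ (p:ℤ) ∣ x) (h : (p:ℤ)^e ∣ x * R) : (p:ℤ)^e ∣ R := by
  induction e generalizing R with
  | zero => exact one_dvd _
  | succ n ih =>
    have hp' : Prime (p:ℤ) := Nat.prime_iff_prime_int.1 hp
    have hpR : (p:ℤ) ∣ R := by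
      rcases hp'.dvd_mul.1 (dvd_trans (dvd_pow_self (p:ℤ) (Nat.succ_ne_zero n)) h) with h1 | h1
      · exact absurd h1 hx
      · exact h1
    obtain ⟨R', rfl⟩ := hpR
    have hcan : (p:ℤ)^n ∣ x * R' := by
      have h2 : (p:ℤ) * (p:ℤ)^n ∣ (p:ℤ) * (x * R') := by
        rw [← pow_succ']
        calc (p:ℤ)^(n+1) ∣ x * ((p:ℤ) * R') := h
        _ = (p:ℤ) * (x * R') := by ring
      exact (mul_dvd_mul_iff_left (by exact_mod_cast hp.ne_zero : (p:ℤ) ≠ 0)).1 h2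
    rw [pow_succ']
    exact mul_dvd_mul_left _ (ih hcan)

lemma pow_dvd_le {p : ℕ} (hp : p.Prime) {k n : ℕ} {x : ℤ} (hx : ¬ (p:ℤ) ∣ x)
    (h : (p:ℤ)^n ∣ (p:ℤ)^k * x) : n ≤ k := by
  by_contra hlt
  push_neg at hlt
  have h1 : (p:ℤ)^(k+1) ∣ (p:ℤ)^k * x := dvd_trans (pow_dvd_pow _ hlt) h
  rw [pow_succ] at h1
  exact hx ((mul_dvd_mul_iff_left (pow_ne_zero k (by exact_mod_cast hp.ne_zero : (p:ℤ) ≠ 0))).1 h1)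

lemma exists_pfac {p : ℕ} (hp : p.Prime) {z : ℤ} (hz : z ≠ 0) :
    ∃ (k : ℕ) (u : ℤ), z = (p:ℤ)^k * u ∧ ¬ (p:ℤ) ∣ u := by
  have hn : z.natAbs ≠ 0 := Int.natAbs_ne_zero.2 hz
  obtain ⟨m, hm⟩ := Nat.ordProj_dvd z.natAbs p
  set k := z.natAbs.factorization p with hk
  have hpm : ¬ p ∣ m := by
    intro hd
    have : p^(k+1) ∣ z.natAbs := by
      rw [hm, pow_succ]
      exact mul_dvd_mul (dvd_refl _) hd
    exact Nat.pow_succ_factorization_not_dvd hn hp this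
  have hpm' : ¬ (p:ℤ) ∣ (m:ℤ) := by exact_mod_cast hpm
  rcases Int.natAbs_eq z with h | h
  · exact ⟨k, m, by rw [h, hm]; push_cast; ring, hpm'⟩
  · refine ⟨k, -(m:ℤ), by rw [h, hm]; push_cast; ring, ?_⟩
    rw [dvd_neg]; exact hpm'

lemma modeq_dvd_iff {n x y : ℤ} (h : x ≡ y [ZMOD n]) : n ∣ x ↔ n ∣ y := by
  constructor <;> intro hd
  · exact (Int.modEq_zero_iff_dvd).1 (h.symm.trans (Int.modEq_zero_iff_dvd.2 hd))
  · exact (Int.modEq_zero_iff_dvd).1 (h.trans (Int.modEq_zero_iff_dvd.2 hd))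

lemma count_cong (q n : ℕ) (hq : 0 < q) (cond : ℕ → Prop) [DecidablePred cond]
    (h : ∀ s ∈ (range (q*n)).filter cond, ∀ t ∈ (range (q*n)).filter cond,
      (q:ℤ) ∣ (s:ℤ) - (t:ℤ)) :
    ((range (q*n)).filter cond).card ≤ n := by
  have key : ((range (q*n)).filter cond).card ≤ (range n).card := by
    apply Finset.card_le_card_of_injOn (fun t => t / q)
    · intro t ht
      rw [Finset.mem_coe, mem_filter, mem_range] at ht
      rw [Finset.mem_coe, mem_range]
      exact Nat.div_lt_of_lt_mul ht.1
    · intro s hs t ht hst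
      simp only [Finset.mem_coe] at hs ht
      have hd := h s hs t ht
      have hmeq : (s:ℤ) ≡ (t:ℤ) [ZMOD (q:ℤ)] := (Int.ModEq.symm (Int.modEq_iff_dvd.mpr hd))
      have h2 : ((s % q : ℕ) : ℤ) = ((t % q : ℕ) : ℤ) := by
        push_cast
        exact hmeq
      have hnat : s % q = t % q := by exact_mod_cast h2
      simp only at hst
      calc s = q*(s/q) + s%q := (Nat.div_add_mod s q).symm
        _ = q*(t/q) + t%q := by rw [hst, hnat]
        _ = t := Nat.div_add_mod t q
  simpa using key

lemma count_per (q n : ℕ) (hq : 0 < q) (cond : ℕ → Prop) [DecidablePred cond]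
    (h : ∀ t, cond t ↔ cond (t % q)) :
    ((range (q*n)).filter cond).card ≤ ((range q).filter cond).card * n := by
  have key : ((range (q*n)).filter cond).card ≤ (((range q).filter cond) ×ˢ range n).card := by
    apply Finset.card_le_card_of_injOn (fun t => (t % q, t / q))
    · intro t ht
      rw [Finset.mem_coe, mem_filter, mem_range] at ht
      rw [Finset.mem_coe, mem_product, mem_filter, mem_range, mem_range]
      exact ⟨⟨Nat.mod_lt _ hq, (h t).1 ht.2⟩, Nat.div_lt_of_lt_mul ht.1⟩
    · intro s hs t ht hst
      simp only [Prod.mk.injEq] at hst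
      calc s = q*(s/q) + s%q := (Nat.div_add_mod s q).symm
        _ = q*(t/q) + t%q := by rw [hst.1, hst.2]
        _ = t := Nat.div_add_mod t q
  simpa [Finset.card_product] using key

lemma rootBound (p : ℕ) (hp : p.Prime) (M : ℕ) (A B C D₀ s : ℤ)
    (hA : A ≠ 0) (hD : D₀ ≠ 0) (hs : ¬ (p:ℤ) ∣ s)
    (hΔ : B^2 - 4*A*C = D₀ * s^2) :
    ((range (p^M)).filter (fun t : ℕ => (p:ℤ)^M ∣ A*(t:ℤ)^2 + B*(t:ℤ) + C)).card
      ≤ 9 * (A*D₀).natAbs := by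
  have hppos : 0 < p := hp.pos
  have hpz : (p:ℤ) ≠ 0 := by exact_mod_cast hp.ne_zero
  have hp' : Prime (p:ℤ) := Nat.prime_iff_prime_int.1 hp
  obtain ⟨w, d, hd, hdp⟩ := exists_pfac hp hD
  obtain ⟨γ, A', hA', hA'p⟩ := exists_pfac hp (show (2*A : ℤ) ≠ 0 by simp [hA])
  obtain ⟨v, two', h2, h2p⟩ := exists_pfac hp (show (2:ℤ) ≠ 0 by norm_num)
  -- size facts
  have hwle : p^w ≤ D₀.natAbs := by
    have : p^w ∣ D₀.natAbs := by
      have h0 : ((p:ℤ)^w).natAbs ∣ D₀.natAbs := Int.natAbs_dvd_natAbs.2 ⟨d, hd⟩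
      rwa [Int.natAbs_pow, Int.natAbs_natCast] at h0
    exact Nat.le_of_dvd (Int.natAbs_pos.2 hD) this
  have hvγle : p^(v+γ) ≤ 4 * A.natAbs := by
    have hdvd : ((p:ℤ)^(v+γ)).natAbs ∣ ((2:ℤ)*(2*A)).natAbs := by
      apply Int.natAbs_dvd_natAbs.2
      rw [pow_add]
      exact mul_dvd_mul ⟨two', h2⟩ ⟨A', hA'⟩
    have h4 : ((2:ℤ)*(2*A)).natAbs = 4 * A.natAbs := by
      rw [show (2:ℤ)*(2*A) = 4*A by ring, Int.natAbs_mul]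
      norm_num
    rw [h4] at hdvd
    simp only [Int.natAbs_pow, Int.natAbs_natCast] at hdvd
    exact Nat.le_of_dvd (by positivity) hdvd
  have habs : (A*D₀).natAbs = A.natAbs * D₀.natAbs := Int.natAbs_mul A D₀
  by_cases hMsmall : M ≤ w + v + γ
  · calc ((range (p^M)).filter _).card ≤ (range (p^M)).card := Finset.card_filter_le _ _
      _ = p^M := Finset.card_range _
      _ ≤ p^(w+(v+γ)) := Nat.pow_le_pow_right hppos (by omega)
      _ = p^w * p^(v+γ) := pow_add p w (v+γ)
      _ ≤ D₀.natAbs * (4*A.natAbs) := Nat.mul_le_mul hwle hvγle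
      _ ≤ 9 * (A*D₀).natAbs := by rw [habs]; ring_nf; nlinarith [Int.natAbs_pos.2 hD, Int.natAbs_pos.2 hA]
  push_neg at hMsmall
  set F := (range (p^M)).filter (fun t : ℕ => (p:ℤ)^M ∣ A*(t:ℤ)^2 + B*(t:ℤ) + C) with hF
  rcases F.eq_empty_or_nonempty with hFe | ⟨t₀, ht₀⟩
  · rw [hFe]; simp
  rw [hF, mem_filter] at ht₀
  set M' := M - v - w with hM'
  have hM'γ : γ + 1 ≤ M' := by omega
  -- key divisibility facts for members
  have hmem : ∀ t ∈ F, (p:ℤ)^M ∣ (2*A*(t:ℤ)+B)^2 - D₀*s^2 := by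
    intro t ht
    rw [hF, mem_filter] at ht
    have : (2*A*(t:ℤ)+B)^2 - D₀*s^2 = 4*A*(A*(t:ℤ)^2 + B*(t:ℤ) + C) := by
      rw [← hΔ]; ring
    rw [this]
    exact Dvd.dvd.mul_left ht.2 _
  -- no member's u is highly divisible
  have hu2 : ∀ t ∈ F, ¬ (p:ℤ)^(v+w+1) ∣ 2*(2*A*(t:ℤ)+B) := by
    intro t ht hdvd
    set u := 2*A*(t:ℤ)+B
    have h1 : (p:ℤ)^(w+1) ∣ u := by
      have hv1 : (p:ℤ)^v * (p:ℤ)^(w+1) ∣ (p:ℤ)^v * (two' * u) := by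
        rw [← pow_add]
        calc (p:ℤ)^(v+(w+1)) = (p:ℤ)^(v+w+1) := by ring_nf
          _ ∣ 2*u := hdvd
          _ = (p:ℤ)^v * (two' * u) := by rw [h2]; ring
      have := (mul_dvd_mul_iff_left (pow_ne_zero v hpz)).1 hv1
      exact prime_pow_dvd_cancel hp h2p this
    have h2' : (p:ℤ)^(w+1) ∣ D₀ * s^2 := by
      have ha : (p:ℤ)^(w+1) ∣ u^2 := dvd_trans h1 ⟨u, (sq u)⟩
      have hb : (p:ℤ)^(w+1) ∣ u^2 - D₀*s^2 :=
        dvd_trans (pow_dvd_pow _ (by omega)) (hmem t ht)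
      have := dvd_sub ha hb
      simpa using this
    have h3 : (p:ℤ)^(w+1) ∣ D₀ := by
      have hs2 : ¬ (p:ℤ) ∣ s^2 := fun hh => hs (hp'.dvd_of_dvd_pow hh)
      have : (p:ℤ)^(w+1) ∣ s^2 * D₀ := by rwa [mul_comm] at h2'
      exact prime_pow_dvd_cancel hp hs2 this
    rw [hd] at h3
    have h5 : (p:ℤ)^w * (p:ℤ) ∣ (p:ℤ)^w * d := by
      have : (p:ℤ)^(w+1) = (p:ℤ)^w * (p:ℤ) := pow_succ (p:ℤ) w
      rwa [this] at h3
    exact hdp ((mul_dvd_mul_iff_left (pow_ne_zero w hpz)).1 h5)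
  -- the two classes
  set S₁ := (range (p^M)).filter (fun t : ℕ => (p:ℤ)^M' ∣ 2*A*((t:ℤ) - (t₀:ℤ))) with hS₁
  set S₂ := (range (p^M)).filter (fun t : ℕ => (p:ℤ)^M' ∣ 2*A*((t:ℤ) + (t₀:ℤ)) + 2*B) with hS₂
  have hsub : F ⊆ S₁ ∪ S₂ := by
    intro t ht
    have htr : t ∈ range (p^M) := by rw [hF, mem_filter] at ht; exact ht.1
    set u := 2*A*(t:ℤ)+B with hu
    set u₀ := 2*A*(t₀:ℤ)+B with hu₀
    have hgoal : (p:ℤ)^M' ∣ u - u₀ ∨ (p:ℤ)^M' ∣ u + u₀ := by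
      by_contra hcon
      push_neg at hcon
      obtain ⟨hc1, hc2⟩ := hcon
      have hne1 : u - u₀ ≠ 0 := fun hh => hc1 (hh ▸ dvd_zero _)
      have hne2 : u + u₀ ≠ 0 := fun hh => hc2 (hh ▸ dvd_zero _)
      obtain ⟨α, x', hx', hx'p⟩ := exists_pfac hp hne1
      obtain ⟨β, y', hy', hy'p⟩ := exists_pfac hp hne2
      have hαβ : M ≤ α + β := by
        have hm1 : (p:ℤ)^M ∣ (u - u₀) * (u + u₀) := by
          have : (u - u₀) * (u + u₀) = (u^2 - D₀*s^2) - (u₀^2 - D₀*s^2) := by ring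
          rw [this]
          exact dvd_sub (hmem t ht) (hmem t₀ (by rw [hF, mem_filter]; exact ht₀))
        rw [hx', hy'] at hm1
        have : (p:ℤ)^M ∣ (p:ℤ)^(α+β) * (x'*y') := by
          rw [pow_add]
          calc (p:ℤ)^M ∣ (p:ℤ)^α * x' * ((p:ℤ)^β * y') := hm1
            _ = (p:ℤ)^α * (p:ℤ)^β * (x'*y') := by ring
        exact pow_dvd_le hp (fun hh => (hp'.dvd_mul.1 hh).elim hx'p hy'p) this
      have hαM : α < M' := by
        by_contra hh
        push_neg at hh
        exact hc1 (by rw [hx']; exact Dvd.dvd.mul_right (pow_dvd_pow _ hh) x')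
      have hβM : β < M' := by
        by_contra hh
        push_neg at hh
        exact hc2 (by rw [hy']; exact Dvd.dvd.mul_right (pow_dvd_pow _ hh) y')
      have h2u : 2*u = (p:ℤ)^α * x' + (p:ℤ)^β * y' := by
        rw [← hx', ← hy']; ring
      have hnd := hu2 t ht
      rcases le_total α β with hle | hle
      · have hαvw : α ≤ v + w := by
          by_contra hh
          push_neg at hh
          apply hnd
          rw [h2u]
          exact dvd_add (Dvd.dvd.mul_right (pow_dvd_pow _ hh) x')
            (Dvd.dvd.mul_right (pow_dvd_pow _ (by omega)) y')
        omega
      · have hβvw : β ≤ v + w := by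
          by_contra hh
          push_neg at hh
          apply hnd
          rw [h2u]
          exact dvd_add (Dvd.dvd.mul_right (pow_dvd_pow _ (by omega)) x')
            (Dvd.dvd.mul_right (pow_dvd_pow _ hh) y')
        omega
    rcases hgoal with hg | hg
    · apply Finset.mem_union_left
      rw [hS₁, mem_filter]
      refine ⟨htr, ?_⟩
      have : u - u₀ = 2*A*((t:ℤ) - (t₀:ℤ)) := by rw [hu, hu₀]; ring
      rwa [this] at hg
    · apply Finset.mem_union_right
      rw [hS₂, mem_filter]
      refine ⟨htr, ?_⟩
      have : u + u₀ = 2*A*((t:ℤ) + (t₀:ℤ)) + 2*B := by rw [hu, hu₀]; ring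
      rwa [this] at hg
  -- counting each class
  have hpowsplit : p^M = p^(M'-γ) * p^(v+w+γ) := by
    rw [← pow_add]
    congr 1
    omega
  have hcnt : ∀ (T : Finset ℕ) (c₀ : ℤ), T = (range (p^M)).filter
      (fun t : ℕ => (p:ℤ)^M' ∣ 2*A*(t:ℤ) + c₀) → T.card ≤ p^(v+w+γ) := by
    intro T c₀ hT
    rw [hT, hpowsplit]
    apply count_cong _ _ (by positivity)
    intro s₁ hs₁ t₁ ht₁
    rw [mem_filter] at hs₁ ht₁
    have hdd : (p:ℤ)^M' ∣ 2*A*((s₁:ℤ) - (t₁:ℤ)) := by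
      have := dvd_sub hs₁.2 ht₁.2
      have heq : (2*A*(s₁:ℤ) + c₀) - (2*A*(t₁:ℤ) + c₀) = 2*A*((s₁:ℤ) - (t₁:ℤ)) := by ring
      rwa [heq] at this
    rw [hA'] at hdd
    have hdd2 : (p:ℤ)^γ * (p:ℤ)^(M'-γ) ∣ (p:ℤ)^γ * (A' * ((s₁:ℤ) - (t₁:ℤ))) := by
      rw [← pow_add]
      calc (p:ℤ)^(γ + (M'-γ)) = (p:ℤ)^M' := by congr 1; omega
        _ ∣ (p:ℤ)^γ * A' * ((s₁:ℤ) - (t₁:ℤ)) := hdd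
        _ = (p:ℤ)^γ * (A' * ((s₁:ℤ) - (t₁:ℤ))) := by ring
    have := (mul_dvd_mul_iff_left (pow_ne_zero γ hpz)).1 hdd2
    have := prime_pow_dvd_cancel hp hA'p this
    exact_mod_cast this
  have hc1 : S₁.card ≤ p^(v+w+γ) := by
    apply hcnt S₁ (-(2*A*(t₀:ℤ)))
    rw [hS₁]
    congr 1
    funext t
    congr 1
    ring
  have hc2 : S₂.card ≤ p^(v+w+γ) := by
    apply hcnt S₂ (2*A*(t₀:ℤ) + 2*B)
    rw [hS₂]
    congr 1
    funext t
    congr 1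
    ring
  calc F.card ≤ (S₁ ∪ S₂).card := Finset.card_le_card hsub
    _ ≤ S₁.card + S₂.card := Finset.card_union_le _ _
    _ ≤ p^(v+w+γ) + p^(v+w+γ) := Nat.add_le_add hc1 hc2
    _ ≤ 2 * (p^w * p^(v+γ)) := by rw [← pow_add]; ring_nf; omega
    _ ≤ 2 * (D₀.natAbs * (4*A.natAbs)) := Nat.mul_le_mul_left 2 (Nat.mul_le_mul hwle hvγle)
    _ ≤ 9 * (A*D₀).natAbs := by rw [habs]; nlinarith [Int.natAbs_pos.2 hD, Int.natAbs_pos.2 hA]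

lemma count_quad (p : ℕ) (hp : p.Prime) (S M : ℕ) (hMS : M ≤ S) (A B C D₀ s : ℤ)
    (hA : A ≠ 0) (hD : D₀ ≠ 0) (hs : ¬ (p:ℤ) ∣ s) (hΔ : B^2 - 4*A*C = D₀ * s^2) :
    ((range (p^S)).filter (fun t : ℕ => (p:ℤ)^M ∣ A*(t:ℤ)^2 + B*(t:ℤ) + C)).card
      ≤ 9 * (A*D₀).natAbs * p^(S-M) := by
  have hppos : 0 < p := hp.pos
  have hsplit : p^S = p^M * p^(S-M) := by rw [← pow_add]; congr 1; omega
  have hper : ∀ t : ℕ, ((p:ℤ)^M ∣ A*(t:ℤ)^2 + B*(t:ℤ) + C) ↔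
      ((p:ℤ)^M ∣ A*((t % p^M : ℕ):ℤ)^2 + B*((t % p^M : ℕ):ℤ) + C) := by
    intro t
    have h1 : (t:ℤ) ≡ ((t % p^M : ℕ):ℤ) [ZMOD ((p:ℤ)^M)] := by
      have : ((t % p^M : ℕ):ℤ) = (t:ℤ) % ((p^M : ℕ):ℤ) := by push_cast; ring_nf
      rw [this]
      push_cast
      exact (Int.emod_emod_of_dvd _ dvd_rfl).symm
    exact modeq_dvd_iff ((((h1.pow 2).mul_left A).add (h1.mul_left B)).add_right C)
  calc ((range (p^S)).filter (fun t : ℕ => (p:ℤ)^M ∣ A*(t:ℤ)^2 + B*(t:ℤ) + C)).card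
      ≤ ((range (p^M)).filter (fun t : ℕ => (p:ℤ)^M ∣ A*(t:ℤ)^2 + B*(t:ℤ) + C)).card
        * p^(S-M) := by
        rw [hsplit]
        exact count_per _ _ (by positivity) _ hper
    _ ≤ 9 * (A*D₀).natAbs * p^(S-M) :=
        Nat.mul_le_mul_right _ (rootBound p hp M A B C D₀ s hA hD hs hΔ)

theorem stmt5 (g : ℕ) (hg : 2 ≤ g) (a b c : Fin g → ℤ)
    (hirr : ∀ i, ¬ IsSquare (b i ^ 2 - a i * c i))
    (hD : Dconst g a b c ≠ 0) :
    ∃ C : ℕ, 0 < C ∧ ∀ p : ℕ, p.Prime → ∀ e : Fin g → ℕ,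
      rhostar g a b c (fun i => p ^ e i) ≤ C * p ^ (Finset.univ.sup e) := by
  classical
  have ha0 : ∀ i, a i ≠ 0 := fun i h => hirr i ⟨b i, by rw [h]; ring⟩
  have hc0 : ∀ i, c i ≠ 0 := fun i h => hirr i ⟨b i, by rw [h]; ring⟩
  have hδ0 : ∀ i, b i ^ 2 - a i * c i ≠ 0 := fun i h => hirr i (by rw [h]; exact ⟨0, by ring⟩)
  have hres : ∀ i j, i ≠ j → res₂ (a i) (b i) (c i) (a j) (b j) (c j) ≠ 0 := by
    have hZ : (∏ i, ∏ j ∈ Finset.Ioi i, res₂ (a i) (b i) (c i) (a j) (b j) (c j)) ≠ 0 := by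
      intro h
      apply hD
      unfold Dconst
      rw [h, mul_zero]
    rw [Finset.prod_ne_zero_iff] at hZ
    intro i j hij
    rcases lt_or_gt_of_ne hij with h | h
    · exact Finset.prod_ne_zero_iff.1 (hZ i (Finset.mem_univ i)) j (Finset.mem_Ioi.2 h)
    · have h1 := Finset.prod_ne_zero_iff.1 (hZ j (Finset.mem_univ j)) i (Finset.mem_Ioi.2 h)
      rw [← res_swap'] at h1
      exact h1
  set Bf : Fin g → ℕ :=
    fun i => ∏ j ∈ Finset.univ.erase i, (res₂ (a i) (b i) (c i) (a j) (b j) (c j)).natAbs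
    with hBf
  have hBfpos : ∀ i, 0 < Bf i := by
    intro i
    apply Finset.prod_pos
    intro j hj
    exact Int.natAbs_pos.2 (hres i j (Ne.symm (Finset.mem_erase.1 hj).1))
  set Rbig := ∏ i, Bf i with hRbig
  have hRpos : 0 < Rbig := Finset.prod_pos (fun i _ => hBfpos i)
  set Kf : Fin g → ℕ :=
    fun i => 9 * ((a i).natAbs * ((c i).natAbs * (4*(b i^2 - a i*c i)).natAbs)) + 1 with hKf
  set Kbig := ∏ i, Kf i with hKbig
  have hKfpos : ∀ i, 0 < Kf i := fun i => Nat.succ_pos _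
  have hKpos : 0 < Kbig := Finset.prod_pos (fun i _ => hKfpos i)
  refine ⟨2*Kbig*Rbig^2 + 1, by positivity, ?_⟩
  intro p hp e
  have hp' : Prime (p:ℤ) := Nat.prime_iff_prime_int.1 hp
  set S := ∑ i, e i with hSdef
  set M := Finset.univ.sup e with hMdef
  have hP : (∏ i, p ^ e i) = p ^ S := Finset.prod_pow_eq_pow_sum Finset.univ e p
  unfold rhostar
  rw [hP]
  obtain ⟨m, _, hm⟩ := Finset.exists_mem_eq_sup Finset.univ
    ⟨⟨0, by omega⟩, Finset.mem_univ _⟩ e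
  rw [← hMdef] at hm
  have hMS : M ≤ S := by
    rw [hm]
    exact Finset.single_le_sum (fun i _ => Nat.zero_le _) (Finset.mem_univ m)
  by_cases hM0 : M = 0
  · have hS0 : S = 0 := by
      rw [hSdef]
      apply Finset.sum_eq_zero
      intro i _
      exact Nat.le_zero.1 (hM0 ▸ Finset.le_sup (f := e) (Finset.mem_univ i))
    rw [hM0, pow_zero, mul_one]
    calc (Finset.filter _ _).card
        ≤ ((Finset.range (p^S)) ×ˢ (Finset.range (p^S))).card := Finset.card_filter_le _ _
      _ = p^S * p^S := by rw [Finset.card_product, Finset.card_range]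
      _ = 1 := by rw [hS0]; norm_num
      _ ≤ 2*Kbig*Rbig^2 + 1 := Nat.le_add_left 1 _
  have hM1 : 1 ≤ M := Nat.one_le_iff_ne_zero.2 hM0
  have hS1 : S ≠ 0 := by omega
  -- abbreviations
  set pred : ℕ × ℕ → Prop :=
    fun x => (∀ i, ((p ^ e i : ℕ) : ℤ) ∣ qf a b c i ((x.1 : ℤ), (x.2 : ℤ))) ∧
      Nat.gcd (Nat.gcd x.1 x.2) (p ^ S) = 1 with hpred
  set F := ((Finset.range (p^S)) ×ˢ (Finset.range (p^S))).filter pred with hFdef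
  show F.card ≤ (2*Kbig*Rbig^2 + 1) * p ^ M
  have hprim : ∀ x ∈ F, ¬ p ∣ x.1 ∨ ¬ p ∣ x.2 := by
    intro x hx
    rw [hFdef, Finset.mem_filter] at hx
    by_contra hcon
    push_neg at hcon
    have hdg : p ∣ Nat.gcd (Nat.gcd x.1 x.2) (p ^ S) :=
      Nat.dvd_gcd (Nat.dvd_gcd hcon.1 hcon.2) (dvd_pow_self p hS1)
    rw [hx.2.2] at hdg
    exact hp.one_lt.ne' (Nat.dvd_one.1 hdg)
  rcases F.eq_empty_or_nonempty with hFe | ⟨⟨x₁, x₂⟩, hx⟩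
  · rw [hFe]
    simp
  -- Step A: small exponents away from m
  have hxmem := hx
  rw [hFdef, Finset.mem_filter] at hxmem
  obtain ⟨hxpr, hxq, hxg⟩ := hxmem
  have hxor := hprim _ hx
  simp only at hxor
  have hxorZ : ¬ (p:ℤ) ∣ (x₁:ℤ) ∨ ¬ (p:ℤ) ∣ (x₂:ℤ) := by
    rcases hxor with h | h
    · exact Or.inl (fun hh => h (by exact_mod_cast hh))
    · exact Or.inr (fun hh => h (by exact_mod_cast hh))
  have hstepA : ∀ i : Fin g, i ≠ m → p ^ e i ≤ Bf i := by
    intro i hi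
    have h1 : (p:ℤ) ^ e i ∣ qf a b c i ((x₁:ℤ), (x₂:ℤ)) := by exact_mod_cast hxq i
    have hei : e i ≤ e m := hm ▸ Finset.le_sup (f := e) (Finset.mem_univ i)
    have h2 : (p:ℤ) ^ e i ∣ qf a b c m ((x₁:ℤ), (x₂:ℤ)) :=
      dvd_trans (pow_dvd_pow _ hei) (by exact_mod_cast hxq m)
    have hq1 : qf a b c i ((x₁:ℤ), (x₂:ℤ)) =
        a i * (x₁:ℤ)^2 + 2*(b i)*(x₁:ℤ)*(x₂:ℤ) + c i * (x₂:ℤ)^2 := by unfold qf; ring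
    have hq2 : qf a b c m ((x₁:ℤ), (x₂:ℤ)) =
        a m * (x₁:ℤ)^2 + 2*(b m)*(x₁:ℤ)*(x₂:ℤ) + c m * (x₂:ℤ)^2 := by unfold qf; ring
    have hq1' : qf a b c i ((x₁:ℤ), (x₂:ℤ)) =
        c i * (x₂:ℤ)^2 + 2*(b i)*(x₂:ℤ)*(x₁:ℤ) + a i * (x₁:ℤ)^2 := by unfold qf; ring
    have hq2' : qf a b c m ((x₁:ℤ), (x₂:ℤ)) =
        c m * (x₂:ℤ)^2 + 2*(b m)*(x₂:ℤ)*(x₁:ℤ) + a m * (x₁:ℤ)^2 := by unfold qf; ring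
    have hb1 : (p:ℤ) ^ e i ∣ (x₂:ℤ)^3 * res₂ (a i) (b i) (c i) (a m) (b m) (c m) := by
      rw [res_bezout']
      exact dvd_add (Dvd.dvd.mul_left (hq1 ▸ h1) _) (Dvd.dvd.mul_left (hq2 ▸ h2) _)
    have hb2 : (p:ℤ) ^ e i ∣ (x₁:ℤ)^3 * res₂ (a i) (b i) (c i) (a m) (b m) (c m) := by
      rw [← res_rev' (a i) (b i) (c i) (a m) (b m) (c m), res_bezout']
      exact dvd_add (Dvd.dvd.mul_left (hq1' ▸ h1) _) (Dvd.dvd.mul_left (hq2' ▸ h2) _)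
    have hbr : (p:ℤ) ^ e i ∣ res₂ (a i) (b i) (c i) (a m) (b m) (c m) := by
      rcases hxorZ with h | h
      · exact prime_pow_dvd_cancel hp (fun hh => h (hp'.dvd_of_dvd_pow hh)) hb2
      · exact prime_pow_dvd_cancel hp (fun hh => h (hp'.dvd_of_dvd_pow hh)) hb1
    have hnat : p ^ e i ∣ (res₂ (a i) (b i) (c i) (a m) (b m) (c m)).natAbs := by
      have h0 := Int.natAbs_dvd_natAbs.2 hbr
      rwa [Int.natAbs_pow, Int.natAbs_natCast] at h0
    refine le_trans (Nat.le_of_dvd (Int.natAbs_pos.2 (hres i m hi)) hnat) ?_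
    simp only [hBf]
    exact Finset.single_le_prod'
      (f := fun j => (res₂ (a i) (b i) (c i) (a j) (b j) (c j)).natAbs)
      (fun j hj => Nat.one_le_iff_ne_zero.2
        (Int.natAbs_ne_zero.2 (hres i j (Ne.symm (Finset.mem_erase.1 hj).1))))
      (Finset.mem_erase.2 ⟨Ne.symm hi, Finset.mem_univ m⟩)
  have hn : p ^ (S - M) ≤ Rbig := by
    have hsum0 := Finset.sum_erase_add Finset.univ e (Finset.mem_univ m)
    have hsum : ∑ j ∈ Finset.univ.erase m, e j = S - M := by
      rw [hm]; omega
    rw [← hsum, ← Finset.prod_pow_eq_pow_sum]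
    calc ∏ j ∈ Finset.univ.erase m, p ^ e j ≤ ∏ j ∈ Finset.univ.erase m, Bf j :=
        Finset.prod_le_prod' (fun j hj => hstepA j (Finset.mem_erase.1 hj).1)
      _ ≤ Rbig := Finset.prod_le_prod_of_subset_of_one_le' (Finset.subset_univ _)
          (fun j _ _ => hBfpos j)
  -- counting
  set K₂ := 9 * ((a m) * (4*(b m^2 - a m*c m))).natAbs with hK₂
  set K₁ := 9 * ((c m) * (4*(b m^2 - a m*c m))).natAbs with hK₁
  set A₂ := ((Finset.range (p^S)) ×ˢ (Finset.range (p^S))).filter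
      (fun x : ℕ × ℕ => ((p:ℤ)^M ∣ qf a b c m ((x.1:ℤ), (x.2:ℤ))) ∧ ¬ p ∣ x.2) with hA₂
  set A₁ := ((Finset.range (p^S)) ×ˢ (Finset.range (p^S))).filter
      (fun x : ℕ × ℕ => ((p:ℤ)^M ∣ qf a b c m ((x.1:ℤ), (x.2:ℤ))) ∧ ¬ p ∣ x.1) with hA₁
  have hsub : F ⊆ A₁ ∪ A₂ := by
    intro x hxF
    have hor := hprim x hxF
    rw [hFdef, Finset.mem_filter] at hxF
    have hqm : (p:ℤ)^M ∣ qf a b c m ((x.1:ℤ), (x.2:ℤ)) := by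
      have h0 := hxF.2.1 m
      rw [hm]
      exact_mod_cast h0
    rcases hor with h | h
    · exact Finset.mem_union_left _ (by rw [hA₁, Finset.mem_filter]; exact ⟨hxF.1, hqm, h⟩)
    · exact Finset.mem_union_right _ (by rw [hA₂, Finset.mem_filter]; exact ⟨hxF.1, hqm, h⟩)
  have hA2card : A₂.card ≤ p^S * (K₂ * p^(S-M)) := by
    rw [Finset.card_eq_sum_card_fiberwise (f := Prod.snd) (t := Finset.range (p^S))
      (fun x hxA => by rw [hA₂, Finset.mem_coe, Finset.mem_filter, Finset.mem_product] at hxA; exact hxA.1.2)]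
    calc ∑ y ∈ Finset.range (p^S), (A₂.filter (fun x => x.2 = y)).card
        ≤ ∑ _y ∈ Finset.range (p^S), K₂ * p^(S-M) := by
          apply Finset.sum_le_sum
          intro y hy
          by_cases hpy : p ∣ y
          · have hEmpty : A₂.filter (fun x => x.2 = y) = ∅ := by
              rw [Finset.eq_empty_iff_forall_notMem]
              intro x hxm
              rw [Finset.mem_filter] at hxm
              obtain ⟨hxA, hxy⟩ := hxm
              rw [hA₂, Finset.mem_filter] at hxA
              exact hxA.2.2 (hxy ▸ hpy)
            rw [hEmpty]
            simp
          · have hinj : (A₂.filter (fun x => x.2 = y)).card ≤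
                ((Finset.range (p^S)).filter (fun t : ℕ => (p:ℤ)^M ∣
                  (a m)*(t:ℤ)^2 + (2*(b m)*(y:ℤ))*(t:ℤ) + ((c m)*(y:ℤ)^2))).card := by
              apply Finset.card_le_card_of_injOn (fun x => x.1)
              · intro x hxm
                rw [Finset.mem_coe, Finset.mem_filter] at hxm
                obtain ⟨hxA, hxy⟩ := hxm
                rw [hA₂, Finset.mem_filter, Finset.mem_product] at hxA
                rw [Finset.mem_coe, Finset.mem_filter]
                refine ⟨hxA.1.1, ?_⟩
                have hq3 : qf a b c m ((x.1:ℤ), (x.2:ℤ)) =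
                    (a m)*(x.1:ℤ)^2 + (2*(b m)*(x.2:ℤ))*(x.1:ℤ) + ((c m)*(x.2:ℤ)^2) := by
                  unfold qf; ring
                have h0 := hxA.2.1
                rw [hq3, hxy] at h0
                exact h0
              · intro x hx1 x' hx2 heq
                rw [Finset.mem_coe, Finset.mem_filter] at hx1 hx2
                exact Prod.ext heq (hx1.2.trans hx2.2.symm)
            refine le_trans hinj ?_
            exact count_quad p hp S M hMS (a m) (2*(b m)*(y:ℤ)) ((c m)*(y:ℤ)^2)
              (4*(b m^2 - a m*c m)) (y:ℤ) (ha0 m)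
              (mul_ne_zero (by norm_num) (hδ0 m))
              (fun hh => hpy (by exact_mod_cast hh)) (by ring)
      _ = p^S * (K₂ * p^(S-M)) := by rw [Finset.sum_const, Finset.card_range, smul_eq_mul]
  have hA1card : A₁.card ≤ p^S * (K₁ * p^(S-M)) := by
    rw [Finset.card_eq_sum_card_fiberwise (f := Prod.fst) (t := Finset.range (p^S))
      (fun x hxA => by rw [hA₁, Finset.mem_coe, Finset.mem_filter, Finset.mem_product] at hxA; exact hxA.1.1)]
    calc ∑ y ∈ Finset.range (p^S), (A₁.filter (fun x => x.1 = y)).card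
        ≤ ∑ _y ∈ Finset.range (p^S), K₁ * p^(S-M) := by
          apply Finset.sum_le_sum
          intro y hy
          by_cases hpy : p ∣ y
          · have hEmpty : A₁.filter (fun x => x.1 = y) = ∅ := by
              rw [Finset.eq_empty_iff_forall_notMem]
              intro x hxm
              rw [Finset.mem_filter] at hxm
              obtain ⟨hxA, hxy⟩ := hxm
              rw [hA₁, Finset.mem_filter] at hxA
              exact hxA.2.2 (hxy ▸ hpy)
            rw [hEmpty]
            simp
          · have hinj : (A₁.filter (fun x => x.1 = y)).card ≤
                ((Finset.range (p^S)).filter (fun t : ℕ => (p:ℤ)^M ∣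
                  (c m)*(t:ℤ)^2 + (2*(b m)*(y:ℤ))*(t:ℤ) + ((a m)*(y:ℤ)^2))).card := by
              apply Finset.card_le_card_of_injOn (fun x => x.2)
              · intro x hxm
                rw [Finset.mem_coe, Finset.mem_filter] at hxm
                obtain ⟨hxA, hxy⟩ := hxm
                rw [hA₁, Finset.mem_filter, Finset.mem_product] at hxA
                rw [Finset.mem_coe, Finset.mem_filter]
                refine ⟨hxA.1.2, ?_⟩
                have hq3 : qf a b c m ((x.1:ℤ), (x.2:ℤ)) =
                    (c m)*(x.2:ℤ)^2 + (2*(b m)*(x.1:ℤ))*(x.2:ℤ) + ((a m)*(x.1:ℤ)^2) := by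
                  unfold qf; ring
                have h0 := hxA.2.1
                rw [hq3, hxy] at h0
                exact h0
              · intro x hx1 x' hx2 heq
                rw [Finset.mem_coe, Finset.mem_filter] at hx1 hx2
                exact Prod.ext (hx1.2.trans hx2.2.symm) heq
            refine le_trans hinj ?_
            exact count_quad p hp S M hMS (c m) (2*(b m)*(y:ℤ)) ((a m)*(y:ℤ)^2)
              (4*(b m^2 - a m*c m)) (y:ℤ) (hc0 m)
              (mul_ne_zero (by norm_num) (hδ0 m))
              (fun hh => hpy (by exact_mod_cast hh)) (by ring)
      _ = p^S * (K₁ * p^(S-M)) := by rw [Finset.sum_const, Finset.card_range, smul_eq_mul]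
  -- assemble
  have hKle : ∀ i : Fin g, 1 ≤ Kf i := fun i => hKfpos i
  have hK2le : K₂ ≤ Kbig := by
    have h4 : ((a m) * (4*(b m^2 - a m*c m))).natAbs =
        (a m).natAbs * (4*(b m^2 - a m*c m)).natAbs := Int.natAbs_mul _ _
    have hcm : 0 < (c m).natAbs := Int.natAbs_pos.2 (hc0 m)
    have hKfm : K₂ ≤ Kf m := by
      rw [hK₂, h4]
      simp only [hKf]
      have h5 : (a m).natAbs * (4*(b m^2 - a m*c m)).natAbs ≤
          (a m).natAbs * ((c m).natAbs * (4*(b m^2 - a m*c m)).natAbs) := by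
        apply Nat.mul_le_mul_left
        exact Nat.le_mul_of_pos_left _ hcm
      omega
    exact le_trans hKfm (Finset.single_le_prod' (f := Kf) (fun i _ => hKle i) (Finset.mem_univ m))
  have hK1le : K₁ ≤ Kbig := by
    have h4 : ((c m) * (4*(b m^2 - a m*c m))).natAbs =
        (c m).natAbs * (4*(b m^2 - a m*c m)).natAbs := Int.natAbs_mul _ _
    have ham : 0 < (a m).natAbs := Int.natAbs_pos.2 (ha0 m)
    have hKfm : K₁ ≤ Kf m := by
      rw [hK₁, h4]
      simp only [hKf]
      have h5 : (c m).natAbs * (4*(b m^2 - a m*c m)).natAbs ≤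
          (a m).natAbs * ((c m).natAbs * (4*(b m^2 - a m*c m)).natAbs) := by
        rw [← Nat.mul_assoc]
        apply Nat.mul_le_mul_right
        exact Nat.le_mul_of_pos_left _ ham
      omega
    exact le_trans hKfm (Finset.single_le_prod' (f := Kf) (fun i _ => hKle i) (Finset.mem_univ m))
  have hps : p^S = p^M * p^(S-M) := by rw [← pow_add]; congr 1; omega
  have hterm : ∀ K : ℕ, K ≤ Kbig → p^S * (K * p^(S-M)) ≤ Kbig*Rbig^2*p^M := by
    intro K hK
    rw [hps]
    calc p^M * p^(S-M) * (K * p^(S-M)) = K * (p^(S-M) * p^(S-M)) * p^M := by ring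
      _ ≤ Kbig * (Rbig * Rbig) * p^M :=
          Nat.mul_le_mul_right _ (Nat.mul_le_mul hK (Nat.mul_le_mul hn hn))
      _ = Kbig * Rbig^2 * p^M := by ring
  calc F.card ≤ (A₁ ∪ A₂).card := Finset.card_le_card hsub
    _ ≤ A₁.card + A₂.card := Finset.card_union_le _ _
    _ ≤ p^S * (K₁ * p^(S-M)) + p^S * (K₂ * p^(S-M)) := Nat.add_le_add hA1card hA2card
    _ ≤ Kbig*Rbig^2*p^M + Kbig*Rbig^2*p^M :=
        Nat.add_le_add (hterm K₁ hK1le) (hterm K₂ hK2le)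
    _ = 2*Kbig*Rbig^2 * p^M := by ring
    _ ≤ (2*Kbig*Rbig^2 + 1) * p^M := Nat.mul_le_mul_right _ (Nat.le_succ _)
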